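/- Let {γ_{ij}}_{i≠j, 1≤i,j≤3} be class-K functions satisfying the cyclic small-gain conditions for all cycles of length 2 and 3 among indices {1,2,3}. Suppose continuous functions y₁, y₂, y₃ : [0,∞) → ℝ≥0 and constants c, u₁, u₂, u₃ ≥ 0 satisfy y_i(t) ≤ max_{j≠i}{c, γ_{ij}(sup_{s<t} y_j(s)), u_i} for all t ≥ 0 and each i. Then each y_i is bounded on [0,∞), with a bound depending only on c, u₁, u₂, u₃ and the functions γ_{ij} (via compositions and maxima). -/

import Mathlib

open NNReal

def ClassK (γ : ℝ≥0 → ℝ≥0) : Prop := Continuous γ ∧ StrictMono γ ∧ γ 0 = 0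

/-- Flip lemma: if `f ∘ g < id` on positives then `g ∘ f < id` on positives. -/
lemma sg_flip (f g : ℝ≥0 → ℝ≥0) (mf : Monotone f) (hg0 : g 0 = 0)
    (h : ∀ s, 0 < s → f (g s) < s) : ∀ s, 0 < s → g (f s) < s := by
  intro s hs
  by_contra hle
  push_neg at hle
  rcases eq_or_lt_of_le (zero_le : (0:ℝ≥0) ≤ f s) with h0 | h0
  · rw [← h0, hg0] at hle
    exact absurd hs (not_lt_of_ge hle)
  · exact absurd (mf hle) (not_le_of_gt (h (f s) h0))

/-- Algebraic small-gain lemma for three interconnected quantities. -/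
lemma sg_key (g12 g13 g21 g23 g31 g32 : ℝ≥0 → ℝ≥0)
    (m12 : Monotone g12) (m13 : Monotone g13) (m23 : Monotone g23)
    (m32 : Monotone g32)
    (z12 : g12 0 = 0) (z13 : g13 0 = 0) (z32 : g32 0 = 0)
    (s1 : ∀ s, 0 < s → g12 (g21 s) < s)
    (s2 : ∀ s, 0 < s → g13 (g31 s) < s)
    (s3 : ∀ s, 0 < s → g23 (g32 s) < s)
    (s4 : ∀ s, 0 < s → g12 (g23 (g31 s)) < s)
    (s5 : ∀ s, 0 < s → g13 (g32 (g21 s)) < s)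
    (a b c w1 w2 w3 : ℝ≥0)
    (ha : a ≤ max w1 (max (g12 b) (g13 c)))
    (hb : b ≤ max w2 (max (g21 a) (g23 c)))
    (hc : c ≤ max w3 (max (g31 a) (g32 b))) :
    a ≤ max w1 (max (g12 w2) (max (g13 w3)
      (max (g12 (g23 w3)) (g13 (g32 w2))))) := by
  rcases le_max_iff.mp ha with h1 | h1
  · exact le_max_of_le_left h1
  rcases le_max_iff.mp h1 with hab | hac
  · -- a ≤ g12 b
    rcases le_max_iff.mp hb with h2 | h2
    · exact le_max_of_le_right <| le_max_of_le_left (hab.trans (m12 h2))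
    rcases le_max_iff.mp h2 with hba | hbc
    · -- b ≤ g21 a
      have h0 : a = 0 := by
        by_contra hne
        exact absurd (hab.trans (m12 hba))
          (not_le_of_gt (s1 a (pos_iff_ne_zero.mpr hne)))
      simp [h0]
    · -- b ≤ g23 c
      rcases le_max_iff.mp hc with h3 | h3
      · exact le_max_of_le_right <| le_max_of_le_right <| le_max_of_le_right <|
          le_max_of_le_left (hab.trans (m12 (hbc.trans (m23 h3))))
      rcases le_max_iff.mp h3 with hca | hcb
      · -- c ≤ g31 a
        have h0 : a = 0 := by
          by_contra hne
          exact absurd (hab.trans (m12 (hbc.trans (m23 hca))))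
            (not_le_of_gt (s4 a (pos_iff_ne_zero.mpr hne)))
        simp [h0]
      · -- c ≤ g32 b : b ≤ g23 (g32 b)
        have hb0 : b = 0 := by
          by_contra hne
          exact absurd (hbc.trans (m23 hcb))
            (not_le_of_gt (s3 b (pos_iff_ne_zero.mpr hne)))
        have h0 : a = 0 := le_antisymm (by simpa [hb0, z12] using hab) zero_le
        simp [h0]
  · -- a ≤ g13 c
    rcases le_max_iff.mp hc with h2 | h2
    · exact le_max_of_le_right <| le_max_of_le_right <|
        le_max_of_le_left (hac.trans (m13 h2))
    rcases le_max_iff.mp h2 with hca | hcb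
    · -- c ≤ g31 a
      have h0 : a = 0 := by
        by_contra hne
        exact absurd (hac.trans (m13 hca))
          (not_le_of_gt (s2 a (pos_iff_ne_zero.mpr hne)))
      simp [h0]
    · -- c ≤ g32 b
      rcases le_max_iff.mp hb with h3 | h3
      · exact le_max_of_le_right <| le_max_of_le_right <| le_max_of_le_right <|
          le_max_of_le_right (hac.trans (m13 (hcb.trans (m32 h3))))
      rcases le_max_iff.mp h3 with hba | hbc
      · -- b ≤ g21 a
        have h0 : a = 0 := by
          by_contra hne
          exact absurd (hac.trans (m13 (hcb.trans (m32 hba))))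
            (not_le_of_gt (s5 a (pos_iff_ne_zero.mpr hne)))
        simp [h0]
      · -- b ≤ g23 c and c ≤ g32 b
        have hb0 : b = 0 := by
          by_contra hne
          exact absurd (hbc.trans (m23 hcb))
            (not_le_of_gt (s3 b (pos_iff_ne_zero.mpr hne)))
        have hc0 : c = 0 := le_antisymm (by simpa [hb0, z32] using hcb) zero_le
        have h0 : a = 0 := le_antisymm (by simpa [hc0, z13] using hac) zero_le
        simp [h0]

lemma max_bound_aux {c u A A' B B' : ℝ≥0} (hA : A ≤ A') (hB : B ≤ B') :
    max c (max A (max B u)) ≤ max (max c u) (max A' B') := by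
  apply max_le (le_max_of_le_left (le_max_left _ _))
  apply max_le (le_max_of_le_right (le_max_of_le_left hA))
  apply max_le (le_max_of_le_right (le_max_of_le_right hB))
  exact le_max_of_le_left (le_max_right _ _)

theorem trajectory_smallgain_three_bounded
    (γ₁₂ γ₁₃ γ₂₁ γ₂₃ γ₃₁ γ₃₂ : ℝ≥0 → ℝ≥0)
    (h₁₂ : ClassK γ₁₂) (h₁₃ : ClassK γ₁₃) (h₂₁ : ClassK γ₂₁)
    (h₂₃ : ClassK γ₂₃) (h₃₁ : ClassK γ₃₁) (h₃₂ : ClassK γ₃₂)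
    (hsg₁ : ∀ s : ℝ≥0, 0 < s → γ₁₂ (γ₂₁ s) < s)
    (hsg₂ : ∀ s : ℝ≥0, 0 < s → γ₁₃ (γ₃₁ s) < s)
    (hsg₃ : ∀ s : ℝ≥0, 0 < s → γ₂₃ (γ₃₂ s) < s)
    (hsg₄ : ∀ s : ℝ≥0, 0 < s → γ₁₂ (γ₂₃ (γ₃₁ s)) < s)
    (hsg₅ : ∀ s : ℝ≥0, 0 < s → γ₁₃ (γ₃₂ (γ₂₁ s)) < s)
    (y₁ y₂ y₃ : ℝ → ℝ≥0) (c u₁ u₂ u₃ : ℝ≥0)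
    (hy₁ : ContinuousOn y₁ (Set.Ici 0)) (hy₂ : ContinuousOn y₂ (Set.Ici 0))
    (hy₃ : ContinuousOn y₃ (Set.Ici 0))
    (hb₁ : ∀ t : ℝ, 0 ≤ t → y₁ t ≤
      max c (max (γ₁₂ (⨆ s : Set.Ico (0:ℝ) t, y₂ s))
        (max (γ₁₃ (⨆ s : Set.Ico (0:ℝ) t, y₃ s)) u₁)))
    (hb₂ : ∀ t : ℝ, 0 ≤ t → y₂ t ≤
      max c (max (γ₂₁ (⨆ s : Set.Ico (0:ℝ) t, y₁ s))
        (max (γ₂₃ (⨆ s : Set.Ico (0:ℝ) t, y₃ s)) u₂)))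
    (hb₃ : ∀ t : ℝ, 0 ≤ t → y₃ t ≤
      max c (max (γ₃₁ (⨆ s : Set.Ico (0:ℝ) t, y₁ s))
        (max (γ₃₂ (⨆ s : Set.Ico (0:ℝ) t, y₂ s)) u₃))) :
    ∃ B₁ B₂ B₃ : ℝ≥0,
      (∀ t : ℝ, 0 ≤ t → y₁ t ≤ B₁) ∧
      (∀ t : ℝ, 0 ≤ t → y₂ t ≤ B₂) ∧
      (∀ t : ℝ, 0 ≤ t → y₃ t ≤ B₃) := by
  obtain ⟨-, sm₁₂, z₁₂⟩ := h₁₂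
  obtain ⟨-, sm₁₃, z₁₃⟩ := h₁₃
  obtain ⟨-, sm₂₁, z₂₁⟩ := h₂₁
  obtain ⟨-, sm₂₃, z₂₃⟩ := h₂₃
  obtain ⟨-, sm₃₁, z₃₁⟩ := h₃₁
  obtain ⟨-, sm₃₂, z₃₂⟩ := h₃₂
  have m₁₂ := sm₁₂.monotone
  have m₁₃ := sm₁₃.monotone
  have m₂₁ := sm₂₁.monotone
  have m₂₃ := sm₂₃.monotone
  have m₃₁ := sm₃₁.monotone
  have m₃₂ := sm₃₂.monotone
  -- flipped / permuted small-gain conditions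
  have f₁ : ∀ s, 0 < s → γ₂₁ (γ₁₂ s) < s := sg_flip γ₁₂ γ₂₁ m₁₂ z₂₁ hsg₁
  have f₂ : ∀ s, 0 < s → γ₃₁ (γ₁₃ s) < s := sg_flip γ₁₃ γ₃₁ m₁₃ z₃₁ hsg₂
  have f₃ : ∀ s, 0 < s → γ₃₂ (γ₂₃ s) < s := sg_flip γ₂₃ γ₃₂ m₂₃ z₃₂ hsg₃
  have f₄ : ∀ s, 0 < s → γ₂₃ (γ₃₁ (γ₁₂ s)) < s :=
    sg_flip γ₁₂ (fun s => γ₂₃ (γ₃₁ s)) m₁₂ (by simp [z₃₁, z₂₃]) hsg₄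
  have f₄' : ∀ s, 0 < s → γ₃₁ (γ₁₂ (γ₂₃ s)) < s :=
    sg_flip (fun s => γ₁₂ (γ₂₃ s)) γ₃₁ (m₁₂.comp m₂₃) z₃₁ hsg₄
  have f₅ : ∀ s, 0 < s → γ₂₁ (γ₁₃ (γ₃₂ s)) < s :=
    sg_flip (fun s => γ₁₃ (γ₃₂ s)) γ₂₁ (m₁₃.comp m₃₂) z₂₁ hsg₅
  have f₅' : ∀ s, 0 < s → γ₃₂ (γ₂₁ (γ₁₃ s)) < s :=
    sg_flip γ₁₃ (fun s => γ₃₂ (γ₂₁ s)) m₁₃ (by simp [z₂₁, z₃₂]) hsg₅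
  set w1 := max c u₁ with hw1
  set w2 := max c u₂ with hw2
  set w3 := max c u₃ with hw3
  refine ⟨max w1 (max (γ₁₂ w2) (max (γ₁₃ w3)
      (max (γ₁₂ (γ₂₃ w3)) (γ₁₃ (γ₃₂ w2))))),
    max w2 (max (γ₂₃ w3) (max (γ₂₁ w1)
      (max (γ₂₃ (γ₃₁ w1)) (γ₂₁ (γ₁₃ w3))))),
    max w3 (max (γ₃₁ w1) (max (γ₃₂ w2)
      (max (γ₃₁ (γ₁₂ w2)) (γ₃₂ (γ₂₁ w1))))), ?_, ?_, ?_⟩ <;>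
  · intro t ht
    have hc₁ : ContinuousOn y₁ (Set.Icc 0 t) := hy₁.mono Set.Icc_subset_Ici_self
    have hc₂ : ContinuousOn y₂ (Set.Icc 0 t) := hy₂.mono Set.Icc_subset_Ici_self
    have hc₃ : ContinuousOn y₃ (Set.Icc 0 t) := hy₃.mono Set.Icc_subset_Ici_self
    have hbd₁ : BddAbove (y₁ '' Set.Icc 0 t) :=
      (isCompact_Icc.image_of_continuousOn hc₁).bddAbove
    have hbd₂ : BddAbove (y₂ '' Set.Icc 0 t) :=
      (isCompact_Icc.image_of_continuousOn hc₂).bddAbove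
    have hbd₃ : BddAbove (y₃ '' Set.Icc 0 t) :=
      (isCompact_Icc.image_of_continuousOn hc₃).bddAbove
    set M₁ := sSup (y₁ '' Set.Icc 0 t) with hM₁
    set M₂ := sSup (y₂ '' Set.Icc 0 t) with hM₂
    set M₃ := sSup (y₃ '' Set.Icc 0 t) with hM₃
    have hmem₁ : ∀ s ∈ Set.Icc (0:ℝ) t, y₁ s ≤ M₁ :=
      fun s hs => le_csSup hbd₁ ⟨s, hs, rfl⟩
    have hmem₂ : ∀ s ∈ Set.Icc (0:ℝ) t, y₂ s ≤ M₂ :=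
      fun s hs => le_csSup hbd₂ ⟨s, hs, rfl⟩
    have hmem₃ : ∀ s ∈ Set.Icc (0:ℝ) t, y₃ s ≤ M₃ :=
      fun s hs => le_csSup hbd₃ ⟨s, hs, rfl⟩
    have hsup₁ : ∀ r : ℝ, r ≤ t → (⨆ s : Set.Ico (0:ℝ) r, y₁ s) ≤ M₁ :=
      fun r hrt => ciSup_le' fun ⟨s, hs⟩ =>
        hmem₁ s ⟨hs.1, le_of_lt (lt_of_lt_of_le hs.2 hrt)⟩
    have hsup₂ : ∀ r : ℝ, r ≤ t → (⨆ s : Set.Ico (0:ℝ) r, y₂ s) ≤ M₂ :=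
      fun r hrt => ciSup_le' fun ⟨s, hs⟩ =>
        hmem₂ s ⟨hs.1, le_of_lt (lt_of_lt_of_le hs.2 hrt)⟩
    have hsup₃ : ∀ r : ℝ, r ≤ t → (⨆ s : Set.Ico (0:ℝ) r, y₃ s) ≤ M₃ :=
      fun r hrt => ciSup_le' fun ⟨s, hs⟩ =>
        hmem₃ s ⟨hs.1, le_of_lt (lt_of_lt_of_le hs.2 hrt)⟩
    have hne : (y₁ '' Set.Icc 0 t).Nonempty := ⟨y₁ 0, 0, ⟨le_refl 0, ht⟩, rfl⟩
    have hne₂ : (y₂ '' Set.Icc 0 t).Nonempty := ⟨y₂ 0, 0, ⟨le_refl 0, ht⟩, rfl⟩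
    have hne₃ : (y₃ '' Set.Icc 0 t).Nonempty := ⟨y₃ 0, 0, ⟨le_refl 0, ht⟩, rfl⟩
    have HM₁ : M₁ ≤ max w1 (max (γ₁₂ M₂) (γ₁₃ M₃)) := by
      apply csSup_le hne
      rintro x ⟨r, hr, rfl⟩
      exact (hb₁ r hr.1).trans
        (max_bound_aux (m₁₂ (hsup₂ r hr.2)) (m₁₃ (hsup₃ r hr.2)))
    have HM₂ : M₂ ≤ max w2 (max (γ₂₁ M₁) (γ₂₃ M₃)) := by
      apply csSup_le hne₂
      rintro x ⟨r, hr, rfl⟩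
      exact (hb₂ r hr.1).trans
        (max_bound_aux (m₂₁ (hsup₁ r hr.2)) (m₂₃ (hsup₃ r hr.2)))
    have HM₃ : M₃ ≤ max w3 (max (γ₃₁ M₁) (γ₃₂ M₂)) := by
      apply csSup_le hne₃
      rintro x ⟨r, hr, rfl⟩
      exact (hb₃ r hr.1).trans
        (max_bound_aux (m₃₁ (hsup₁ r hr.2)) (m₃₂ (hsup₂ r hr.2)))
    first
    | exact (hmem₁ t ⟨ht, le_refl t⟩).trans
        (sg_key γ₁₂ γ₁₃ γ₂₁ γ₂₃ γ₃₁ γ₃₂ m₁₂ m₁₃ m₂₃ m₃₂ z₁₂ z₁₃ z₃₂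
          hsg₁ hsg₂ hsg₃ hsg₄ hsg₅ M₁ M₂ M₃ w1 w2 w3
          HM₁ HM₂ HM₃)
    | exact (hmem₂ t ⟨ht, le_refl t⟩).trans
        (sg_key γ₂₃ γ₂₁ γ₃₂ γ₃₁ γ₁₂ γ₁₃ m₂₃ m₂₁ m₃₁ m₁₃ z₂₃ z₂₁ z₁₃
          hsg₃ f₁ f₂ f₄ f₅ M₂ M₃ M₁ w2 w3 w1
          (by rwa [max_comm (γ₂₁ M₁) (γ₂₃ M₃)] at HM₂)
          (by rwa [max_comm (γ₃₁ M₁) (γ₃₂ M₂)] at HM₃)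
          HM₁)
    | exact (hmem₃ t ⟨ht, le_refl t⟩).trans
        (sg_key γ₃₁ γ₃₂ γ₁₃ γ₁₂ γ₂₃ γ₂₁ m₃₁ m₃₂ m₁₂ m₂₁ z₃₁ z₃₂ z₂₁
          f₂ f₃ hsg₁ f₄' f₅' M₃ M₁ M₂ w3 w1 w2
          HM₃
          (by rwa [max_comm (γ₁₂ M₂) (γ₁₃ M₃)] at HM₁)
          (by rwa [max_comm (γ₂₁ M₁) (γ₂₃ M₃)] at HM₂))
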